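/- arXiv:2208.12583 — 2 statements merged into one kernel-verified Lean document; each statement's English description precedes it below -/
import Mathlib

section
/- For all integers 1 ≤ p, q ≤ N, A A* = Γ S(q,p) Γ*, where Γ ∈ ℂ^{p×p} is the unitary diagonal matrix with entries Γ_{j,j} = exp(-iπ(j-1)(q-1)/N) for 1 ≤ j ≤ p. In particular, A A* is unitarily similar, via a diagonal unitary, to the real symmetric matrix S(q,p). -/
open Matrix Complex

/-- The twiddle factor `ω = exp(2πi/N)`. -/
noncomputable def omegaN (N : ℕ) : ℂ := Complex.exp (2 * Real.pi * Complex.I / N)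

/-- The `p × q` Fourier submatrix `A` with entries `A_{j,k} = ω^{-(j-1)(k-1)}`
(indices here are 0-based). -/
noncomputable def fourierA (N p q : ℕ) : Matrix (Fin p) (Fin q) ℂ :=
  fun j k => omegaN N ^ (-(((j : ℕ) * (k : ℕ) : ℕ) : ℤ))

/-- The periodic prolate matrix `S(a,b) ∈ ℝ^{b×b}` with entries
`sin(aπ(j-k)/N)/sin(π(j-k)/N)` off the diagonal and `a` on the diagonal.
In particular `prolateS N q p : Matrix (Fin p) (Fin p) ℝ` is `S(q,p)`. -/
noncomputable def prolateS (N a b : ℕ) : Matrix (Fin b) (Fin b) ℝ :=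
  fun j k => if j = k then (a : ℝ)
    else Real.sin ((a : ℝ) * Real.pi * (((j : ℕ) : ℝ) - ((k : ℕ) : ℝ)) / N) /
         Real.sin (Real.pi * (((j : ℕ) : ℝ) - ((k : ℕ) : ℝ)) / N)

/-- The unitary diagonal matrix `Γ ∈ ℂ^{p×p}` with entries
`Γ_{j,j} = exp(-iπ(j-1)(q-1)/N)` (0-based: `exp(-iπ j (q-1)/N)`). -/
noncomputable def gammaP (N p q : ℕ) : Matrix (Fin p) (Fin p) ℂ :=
  Matrix.diagonal fun j =>
    Complex.exp (-(Real.pi : ℂ) * Complex.I * ((j : ℕ) : ℂ) * ((q : ℂ) - 1) / (N : ℂ))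

/- ### Auxiliary lemmas -/

lemma aux_hstep (s : ℝ) : Complex.exp (-2 * (s:ℂ) * Complex.I) - 1 =
    Complex.exp (-(s:ℂ) * Complex.I) * (-2 * Complex.I * ((Real.sin s : ℝ) : ℂ)) := by
  rw [Complex.ofReal_sin, Complex.sin]
  have e1 : (-2 * (s:ℂ) * I) = (-(s:ℂ)*I) + (-(s:ℂ)*I) := by ring
  have e3 : Complex.exp (-(s:ℂ)*I) * Complex.exp ((s:ℂ)*I) = 1 := by
    rw [← Complex.exp_add, show (-(s:ℂ)*I + s*I) = 0 by ring, Complex.exp_zero]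
  rw [e1, Complex.exp_add]
  linear_combination e3 + Complex.exp (-(s:ℂ)*I) * (Complex.exp (-(s:ℂ)*I) - Complex.exp ((s:ℂ)*I)) * Complex.I_sq

lemma aux_dirichlet (q : ℕ) (t : ℝ) (ht : Real.sin t ≠ 0) :
    ∑ m ∈ Finset.range q, Complex.exp (-2 * (t:ℂ) * Complex.I) ^ m =
      Complex.exp (-(t:ℂ) * Complex.I * ((q:ℂ) - 1)) *
        ((Real.sin ((q:ℝ) * t) / Real.sin t : ℝ) : ℂ) := by
  have htC : ((Real.sin t : ℝ) : ℂ) ≠ 0 := Complex.ofReal_ne_zero.mpr ht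
  have hne : Complex.exp (-2 * (t:ℂ) * Complex.I) ≠ 1 := by
    intro h
    have h1 := aux_hstep t
    rw [h, sub_self] at h1
    exact (mul_ne_zero (Complex.exp_ne_zero _)
      (mul_ne_zero (by norm_num [Complex.I_ne_zero]) htC)) h1.symm
  rw [geom_sum_eq hne]
  have hq : Complex.exp (-2 * (t:ℂ) * Complex.I) ^ q = Complex.exp (-2 * ((q*t : ℝ):ℂ) * Complex.I) := by
    rw [← Complex.exp_nat_mul]
    congr 1
    push_cast
    ring
  rw [hq, div_eq_iff (sub_ne_zero.mpr hne), aux_hstep ((q:ℝ)*t), aux_hstep t, Complex.ofReal_div,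
    div_eq_mul_inv]
  have hE : Complex.exp (-(t:ℂ) * Complex.I * ((q:ℂ)-1)) * Complex.exp (-(t:ℂ)*Complex.I) = Complex.exp (-(((q:ℝ)*t:ℝ):ℂ)*Complex.I) := by
    rw [← Complex.exp_add]
    congr 1
    push_cast
    ring
  have hinv : ((Real.sin t : ℝ) : ℂ) * ((Real.sin t : ℝ) : ℂ)⁻¹ = 1 := mul_inv_cancel₀ htC
  linear_combination (2*Complex.I*((Real.sin ((q:ℝ)*t) : ℝ):ℂ)) * hE +
    (2*Complex.I*((Real.sin ((q:ℝ)*t) : ℝ):ℂ) *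
      Complex.exp (-(t:ℂ) * Complex.I * ((q:ℂ)-1)) * Complex.exp (-(t:ℂ)*Complex.I)) * hinv

lemma aux_gconj (N p q : ℕ) (j : Fin p) :
    (starRingEnd ℂ) (Complex.exp (-(Real.pi : ℂ) * Complex.I * ((j : ℕ) : ℂ) * ((q : ℂ) - 1) / (N : ℂ)))
      = Complex.exp (-(-(Real.pi : ℂ) * Complex.I * ((j : ℕ) : ℂ) * ((q : ℂ) - 1) / (N : ℂ))) := by
  rw [← Complex.exp_conj]
  congr 1
  simp [map_div₀, Complex.conj_I]
  ring

lemma aux_gmul (N p q : ℕ) (j : Fin p) :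
    star (Complex.exp (-(Real.pi : ℂ) * Complex.I * ((j : ℕ) : ℂ) * ((q : ℂ) - 1) / (N : ℂ))) *
      Complex.exp (-(Real.pi : ℂ) * Complex.I * ((j : ℕ) : ℂ) * ((q : ℂ) - 1) / (N : ℂ)) = 1 := by
  rw [RCLike.star_def, aux_gconj, ← Complex.exp_add,
    show (-(-(Real.pi : ℂ) * Complex.I * ((j : ℕ) : ℂ) * ((q : ℂ) - 1) / (N : ℂ)) + -(Real.pi : ℂ) * Complex.I * ((j : ℕ) : ℂ) * ((q : ℂ) - 1) / (N : ℂ)) = 0 by ring, Complex.exp_zero]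

lemma aux_gunit (N p q : ℕ) : (gammaP N p q)ᴴ * gammaP N p q = 1 := by
  rw [gammaP, diagonal_conjTranspose, diagonal_mul_diagonal]
  have : (fun j : Fin p => (star fun i : Fin p =>
      Complex.exp (-(Real.pi : ℂ) * Complex.I * ((i : ℕ) : ℂ) * ((q : ℂ) - 1) / (N : ℂ))) j *
      Complex.exp (-(Real.pi : ℂ) * Complex.I * ((j : ℕ) : ℂ) * ((q : ℂ) - 1) / (N : ℂ)))
      = fun _ => (1:ℂ) := funext fun j => aux_gmul N p q j
  rw [this, diagonal_one]

lemma aux_sin_pos (N a b : ℕ) (h1 : b < a) (h2 : a < N) :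
    0 < Real.sin (Real.pi * ((a:ℝ) - b) / N) := by
  have hNr : (0:ℝ) < N := by exact_mod_cast Nat.pos_of_ne_zero (by omega)
  have hd : (0:ℝ) < (a:ℝ) - b := sub_pos.mpr (by exact_mod_cast h1)
  apply Real.sin_pos_of_pos_of_lt_pi
  · positivity
  · rw [div_lt_iff₀ hNr]
    have haN : (a:ℝ) < N := by exact_mod_cast h2
    have hb0 : (0:ℝ) ≤ b := Nat.cast_nonneg b
    nlinarith [Real.pi_pos]

lemma aux_sin_ne (N a b : ℕ) (ha : a < N) (hb : b < N) (hab : a ≠ b) :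
    Real.sin (Real.pi * ((a:ℝ) - b) / N) ≠ 0 := by
  rcases lt_or_gt_of_ne hab with h | h
  · rw [show Real.pi * ((a:ℝ)-b)/N = -(Real.pi*((b:ℝ)-a)/N) by ring, Real.sin_neg]
    exact neg_ne_zero.mpr (aux_sin_pos N b a h hb).ne'
  · exact (aux_sin_pos N a b h ha).ne'

theorem fourierA_mul_conjTranspose_fourierA
    (N p q : ℕ) (hN : 0 < N) (hp1 : 1 ≤ p) (hpN : p ≤ N) (hq1 : 1 ≤ q) (hqN : q ≤ N) :
    (gammaP N p q)ᴴ * gammaP N p q = 1 ∧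
    fourierA N p q * (fourierA N p q)ᴴ =
      gammaP N p q * (prolateS N q p).map (Complex.ofReal) * (gammaP N p q)ᴴ := by
  refine ⟨aux_gunit N p q, ?_⟩
  have hω : omegaN N ≠ 0 := Complex.exp_ne_zero _
  have hstarω : (starRingEnd ℂ) (omegaN N) = (omegaN N)⁻¹ := by
    rw [omegaN, ← Complex.exp_conj, ← Complex.exp_neg]
    congr 1
    simp [map_div₀, Complex.conj_I, map_ofNat]
    ring
  ext j k
  -- LHS
  have hterm : ∀ m : Fin q, fourierA N p q j m * star (fourierA N p q k m)
      = (omegaN N ^ ((k:ℤ) - (j:ℤ))) ^ (m:ℕ) := by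
    intro m
    simp only [fourierA, RCLike.star_def]
    rw [map_zpow₀, hstarω, _root_.inv_zpow, ← _root_.zpow_neg, neg_neg,
      ← zpow_add₀ hω, ← _root_.zpow_natCast (omegaN N ^ ((k:ℤ) - (j:ℤ))), ← _root_.zpow_mul]
    congr 1
    push_cast
    ring
  have hLHS : (fourierA N p q * (fourierA N p q)ᴴ) j k
      = ∑ m ∈ Finset.range q, (omegaN N ^ ((k:ℤ) - (j:ℤ))) ^ m := by
    rw [Matrix.mul_apply]
    simp only [conjTranspose_apply, RCLike.star_def]
    rw [← Fin.sum_univ_eq_sum_range (fun m => (omegaN N ^ ((k:ℤ) - (j:ℤ))) ^ m) q]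
    exact Finset.sum_congr rfl fun m _ => hterm m
  have hRHS : (gammaP N p q * (prolateS N q p).map (Complex.ofReal) * (gammaP N p q)ᴴ) j k
      = Complex.exp (-(Real.pi : ℂ) * Complex.I * ((j : ℕ) : ℂ) * ((q : ℂ) - 1) / (N : ℂ)) *
        ((prolateS N q p j k : ℝ) : ℂ) *
        star (Complex.exp (-(Real.pi : ℂ) * Complex.I * ((k : ℕ) : ℂ) * ((q : ℂ) - 1) / (N : ℂ))) := by
    simp only [gammaP, diagonal_conjTranspose, Matrix.mul_diagonal, Matrix.diagonal_mul,
      Matrix.map_apply, Pi.star_apply]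
  rw [hLHS, hRHS]
  by_cases hjk : j = k
  · subst hjk
    have hP : prolateS N q p j j = (q:ℝ) := by simp [prolateS]
    rw [hP]
    simp only [sub_self, zpow_zero, one_pow, Finset.sum_const, Finset.card_range, nsmul_eq_mul,
      mul_one]
    rw [show Complex.exp (-(Real.pi : ℂ) * Complex.I * ((j : ℕ) : ℂ) * ((q : ℂ) - 1) / (N : ℂ)) *
        ((q : ℝ) : ℂ) * star (Complex.exp (-(Real.pi : ℂ) * Complex.I * ((j : ℕ) : ℂ) * ((q : ℂ) - 1) / (N : ℂ)))
      = ((q:ℝ):ℂ) * (star (Complex.exp (-(Real.pi : ℂ) * Complex.I * ((j : ℕ) : ℂ) * ((q : ℂ) - 1) / (N : ℂ))) *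
        Complex.exp (-(Real.pi : ℂ) * Complex.I * ((j : ℕ) : ℂ) * ((q : ℂ) - 1) / (N : ℂ))) by ring,
      aux_gmul, mul_one]
    norm_cast
  · -- off-diagonal
    set t : ℝ := Real.pi * (((j:ℕ):ℝ) - ((k:ℕ):ℝ)) / N with ht_def
    have ht : Real.sin t ≠ 0 :=
      aux_sin_ne N (j:ℕ) (k:ℕ) (lt_of_lt_of_le j.isLt hpN) (lt_of_lt_of_le k.isLt hpN)
        (fun h => hjk (Fin.ext h))
    have hw : omegaN N ^ ((k:ℤ) - (j:ℤ)) = Complex.exp (-2 * (t:ℂ) * Complex.I) := by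
      rw [omegaN, ← Complex.exp_int_mul]
      congr 1
      rw [ht_def]
      push_cast
      ring
    rw [hw, aux_dirichlet q t ht]
    have hS : prolateS N q p j k = Real.sin ((q:ℝ) * t) / Real.sin t := by
      rw [prolateS]
      simp only [if_neg hjk]
      rw [ht_def]
      congr 2
      ring
    rw [hS]
    have hdstar : Complex.exp (-(Real.pi : ℂ) * Complex.I * ((j : ℕ) : ℂ) * ((q : ℂ) - 1) / (N : ℂ)) *
        star (Complex.exp (-(Real.pi : ℂ) * Complex.I * ((k : ℕ) : ℂ) * ((q : ℂ) - 1) / (N : ℂ)))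
        = Complex.exp (-(t:ℂ) * Complex.I * ((q:ℂ) - 1)) := by
      rw [RCLike.star_def, aux_gconj, ← Complex.exp_add]
      congr 1
      rw [ht_def]
      push_cast
      ring
    rw [show Complex.exp (-(Real.pi : ℂ) * Complex.I * ((j : ℕ) : ℂ) * ((q : ℂ) - 1) / (N : ℂ)) *
        ((Real.sin ((q:ℝ) * t) / Real.sin t : ℝ) : ℂ) *
        star (Complex.exp (-(Real.pi : ℂ) * Complex.I * ((k : ℕ) : ℂ) * ((q : ℂ) - 1) / (N : ℂ)))
      = (Complex.exp (-(Real.pi : ℂ) * Complex.I * ((j : ℕ) : ℂ) * ((q : ℂ) - 1) / (N : ℂ)) *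
        star (Complex.exp (-(Real.pi : ℂ) * Complex.I * ((k : ℕ) : ℂ) * ((q : ℂ) - 1) / (N : ℂ)))) *
        ((Real.sin ((q:ℝ) * t) / Real.sin t : ℝ) : ℂ) by ring, hdstar]
end

section
/- For all integers 1 ≤ p, q ≤ N, if ũ ∈ ℝ^p satisfies S(q,p) ũ = λ ũ for some λ ∈ ℝ, then the vector u ∈ ℂ^p with entries u_j = exp(-iπ(j-1)(q-1)/N) ũ_j for 1 ≤ j ≤ p satisfies A A* u = λ u. Hence, after normalization, u is a left singular vector of A with singular value √λ. -/
open Matrix Complex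

lemma aux_exp2 (z : ℂ) :
    Complex.exp (2*z*Complex.I) - 1 = Complex.exp (z*Complex.I) * (2*Complex.I*Complex.sin z) := by
  rw [show (2:ℂ)*z*Complex.I = (2*z)*Complex.I by ring, Complex.exp_mul_I, Complex.exp_mul_I,
    Complex.cos_two_mul, Complex.sin_two_mul]
  linear_combination 2 * Complex.sin_sq_add_cos_sq z - 2*(Complex.sin z)^2 * Complex.I_sq

lemma geom_ratio (A B : ℝ) :
    Complex.exp (↑A*I) * (2*I*↑(Real.sin A)) / (Complex.exp (↑B*I)*(2*I*↑(Real.sin B)))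
     = Complex.exp ((↑A-↑B)*I) * (↑(Real.sin A)/↑(Real.sin B)) := by
  rw [show ((A:ℂ)-B)*I = A*I - B*I by ring, Complex.exp_sub]
  have h2I : (2:ℂ)*I ≠ 0 := mul_ne_zero two_ne_zero Complex.I_ne_zero
  rw [show Complex.exp ((A:ℂ)*I) * (2*I*↑(Real.sin A))
      = (2*I) * (Complex.exp ((A:ℂ)*I) * ↑(Real.sin A)) by ring,
    show Complex.exp ((B:ℂ)*I) * (2*I*↑(Real.sin B))
      = (2*I) * (Complex.exp ((B:ℂ)*I) * ↑(Real.sin B)) by ring,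
    mul_div_mul_left _ _ h2I, ← div_mul_div_comm]

lemma sin_ne (N : ℕ) (hN : 0 < N) (x y : ℕ) (hx : x < N) (hy : y < N) (hxy : x ≠ y) :
    Real.sin (Real.pi * ((x:ℝ) - (y:ℝ)) / N) ≠ 0 := by
  intro h
  rw [Real.sin_eq_zero_iff] at h
  obtain ⟨n, hn⟩ := h
  have hN0 : (N:ℝ) ≠ 0 := Nat.cast_ne_zero.2 hN.ne'
  field_simp at hn
  have h2 : (n:ℝ) * N = (x:ℝ) - y := by
    have hπ := Real.pi_ne_zero
    apply mul_left_cancel₀ hπ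
    ring_nf
    ring_nf at hn
    linear_combination Real.pi * hn
  have hxN : (x:ℝ) < N := by exact_mod_cast hx
  have hyN : (y:ℝ) < N := by exact_mod_cast hy
  have hx0 : (0:ℝ) ≤ x := Nat.cast_nonneg x
  have hy0 : (0:ℝ) ≤ y := Nat.cast_nonneg y
  have hNpos : (0:ℝ) < N := by exact_mod_cast hN
  have hb1 : (-1:ℝ) < (n:ℝ) := by nlinarith
  have hb2 : (n:ℝ) < 1 := by nlinarith
  have hn1 : (-1:ℤ) < n := by exact_mod_cast hb1
  have hn2 : (n:ℤ) < 1 := by exact_mod_cast hb2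
  have hzero : n = 0 := by omega
  subst hzero
  have hxy' : (x:ℝ) = y := by
    have := h2; simp at this; linarith
  exact hxy (by exact_mod_cast hxy')

lemma entryAAh (N p q : ℕ) (hN : 0 < N) (hpN : p ≤ N) (j k : Fin p) :
    (fourierA N p q * (fourierA N p q)ᴴ) j k =
      Complex.exp ((Real.pi:ℂ)*Complex.I*(((k:ℕ):ℂ)-((j:ℕ):ℂ))*((q:ℂ)-1)/N)
        * ((prolateS N q p j k : ℝ) : ℂ) := by
  set c : ℂ := 2 * (Real.pi:ℂ) * Complex.I / N with hc
  have homega : omegaN N = Complex.exp c := by rw [omegaN, hc]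
  have hA : ∀ (a : Fin p) (b : Fin q),
      fourierA N p q a b = Complex.exp ((-(((a:ℕ)*(b:ℕ):ℕ):ℂ)) * c) := by
    intro a b
    rw [fourierA, homega, ← Complex.exp_int_mul]
    congr 1
    push_cast
    ring
  have hterm : ∀ m : Fin q, fourierA N p q j m * (starRingEnd ℂ) (fourierA N p q k m)
      = (Complex.exp ((((k:ℕ):ℂ)-((j:ℕ):ℂ))*c))^(m:ℕ) := by
    intro m
    rw [hA, hA, ← Complex.exp_conj, ← Complex.exp_add, ← Complex.exp_nat_mul]
    congr 1
    have hcc : (starRingEnd ℂ) ((-(((k:ℕ)*(m:ℕ):ℕ):ℂ)) * c) = (((k:ℕ)*(m:ℕ):ℕ):ℂ) * c := by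
      rw [hc]
      simp [_root_.map_mul, map_div₀, Complex.conj_I, Complex.conj_ofReal, map_ofNat]
      ring
    rw [hcc]
    push_cast
    ring
  rw [Matrix.mul_apply]
  simp only [Matrix.conjTranspose_apply, Matrix.star_apply, RCLike.star_def]
  simp only [hterm]
  rw [Fin.sum_univ_eq_sum_range (fun i => (Complex.exp ((((k:ℕ):ℂ)-((j:ℕ):ℂ))*c))^i) q]
  by_cases hjk : j = k
  · subst hjk
    rw [show (((j:ℕ):ℂ)-((j:ℕ):ℂ))*c = 0 by ring,
      show (Real.pi:ℂ)*Complex.I*(((j:ℕ):ℂ)-((j:ℕ):ℂ))*((q:ℂ)-1)/N = 0 by ring]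
    simp [prolateS, Complex.exp_zero]
  · set Br : ℝ := Real.pi * (((k:ℕ):ℝ) - ((j:ℕ):ℝ)) / N with hBr
    set Ar : ℝ := q * Br with hAr
    have hxarg : (((k:ℕ):ℂ)-((j:ℕ):ℂ))*c = 2*(Br:ℂ)*Complex.I := by
      rw [hc, hBr]; push_cast; ring
    have hsinB : Real.sin Br ≠ 0 := by
      rw [hBr]
      exact sin_ne N hN k j (lt_of_lt_of_le k.2 hpN) (lt_of_lt_of_le j.2 hpN)
        (fun h => hjk (Fin.ext h.symm))
    have hx1 : Complex.exp ((((k:ℕ):ℂ)-((j:ℕ):ℂ))*c) ≠ 1 := by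
      rw [hxarg]
      intro h
      have := aux_exp2 (Br:ℂ)
      rw [h, sub_self] at this
      have h0 := this.symm
      rw [← Complex.ofReal_sin] at h0
      exact (mul_ne_zero (Complex.exp_ne_zero _)
        (mul_ne_zero (mul_ne_zero two_ne_zero Complex.I_ne_zero)
          (Complex.ofReal_ne_zero.2 hsinB))) h0
    rw [geom_sum_eq hx1 q, hxarg, ← Complex.exp_nat_mul,
      show (q:ℂ) * (2*(Br:ℂ)*Complex.I) = 2*((Ar:ℝ):ℂ)*Complex.I by rw [hAr]; push_cast; ring,
      aux_exp2, aux_exp2, ← Complex.ofReal_sin, ← Complex.ofReal_sin, geom_ratio]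
    congr 1
    · congr 1
      rw [hAr, hBr]
      push_cast
      ring
    · rw [prolateS]
      simp only [if_neg hjk]
      have h1 : Real.sin ((q:ℝ) * Real.pi * (((j:ℕ):ℝ) - ((k:ℕ):ℝ)) / N) = -Real.sin Ar := by
        rw [show (q:ℝ) * Real.pi * (((j:ℕ):ℝ) - ((k:ℕ):ℝ)) / N = -Ar by rw [hAr, hBr]; ring,
          Real.sin_neg]
      have h2 : Real.sin (Real.pi * (((j:ℕ):ℝ) - ((k:ℕ):ℝ)) / N) = -Real.sin Br := by
        rw [show Real.pi * (((j:ℕ):ℝ) - ((k:ℕ):ℝ)) / N = -Br by rw [hBr]; ring, Real.sin_neg]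
      rw [h1, h2, neg_div_neg_eq]
      push_cast
      ring

/-- If `S(q,p) ũ = λ ũ` then the vector `u` with `u_j = exp(-iπ(j-1)(q-1)/N) ũ_j`
satisfies `A A* u = λ u`: it is (after normalization) a left singular vector of `A`
with singular value `√λ`. -/
theorem left_singular_vector_of_prolate_eigenvector
    (N p q : ℕ) (hN : 0 < N) (hp1 : 1 ≤ p) (hpN : p ≤ N) (hq1 : 1 ≤ q) (hqN : q ≤ N)
    (ut : Fin p → ℝ) (lam : ℝ)
    (hSu : (prolateS N q p).mulVec ut = lam • ut) :
    (fourierA N p q * (fourierA N p q)ᴴ).mulVec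
        (fun j : Fin p => Complex.exp (-(Real.pi : ℂ) * Complex.I * ((j : ℕ) : ℂ) *
          ((q : ℂ) - 1) / (N : ℂ)) * (ut j : ℂ)) =
      (lam : ℂ) • (fun j : Fin p => Complex.exp (-(Real.pi : ℂ) * Complex.I * ((j : ℕ) : ℂ) *
          ((q : ℂ) - 1) / (N : ℂ)) * (ut j : ℂ)) := by
  funext j
  have hrow : ∑ k, prolateS N q p j k * ut k = lam * ut j := by
    have := congrFun hSu j
    simpa [Matrix.mulVec, dotProduct] using this
  simp only [Matrix.mulVec, dotProduct, Pi.smul_apply, smul_eq_mul]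
  have hstep : ∀ k : Fin p,
      (fourierA N p q * (fourierA N p q)ᴴ) j k *
        (Complex.exp (-(Real.pi : ℂ) * Complex.I * ((k : ℕ) : ℂ) * ((q : ℂ) - 1) / (N : ℂ))
          * (ut k : ℂ))
      = Complex.exp (-(Real.pi : ℂ) * Complex.I * ((j : ℕ) : ℂ) * ((q : ℂ) - 1) / (N : ℂ))
          * ((prolateS N q p j k * ut k : ℝ) : ℂ) := by
    intro k
    rw [entryAAh N p q hN hpN j k]
    have he : Complex.exp ((Real.pi:ℂ)*Complex.I*(((k:ℕ):ℂ)-((j:ℕ):ℂ))*((q:ℂ)-1)/N) *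
        Complex.exp (-(Real.pi : ℂ) * Complex.I * ((k : ℕ) : ℂ) * ((q : ℂ) - 1) / (N : ℂ))
        = Complex.exp (-(Real.pi : ℂ) * Complex.I * ((j : ℕ) : ℂ) * ((q : ℂ) - 1) / (N : ℂ)) := by
      rw [← Complex.exp_add]
      congr 1
      ring
    push_cast
    calc Complex.exp ((Real.pi:ℂ)*Complex.I*(((k:ℕ):ℂ)-((j:ℕ):ℂ))*((q:ℂ)-1)/N) *
          ((prolateS N q p j k : ℝ) : ℂ) *
          (Complex.exp (-(Real.pi : ℂ) * Complex.I * ((k : ℕ) : ℂ) * ((q : ℂ) - 1) / (N : ℂ))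
            * (ut k : ℂ))
        = (Complex.exp ((Real.pi:ℂ)*Complex.I*(((k:ℕ):ℂ)-((j:ℕ):ℂ))*((q:ℂ)-1)/N) *
            Complex.exp (-(Real.pi : ℂ) * Complex.I * ((k : ℕ) : ℂ) * ((q : ℂ) - 1) / (N : ℂ))) *
            (((prolateS N q p j k : ℝ) : ℂ) * (ut k : ℂ)) := by ring
      _ = Complex.exp (-(Real.pi : ℂ) * Complex.I * ((j : ℕ) : ℂ) * ((q : ℂ) - 1) / (N : ℂ))
            * (((prolateS N q p j k : ℝ) : ℂ) * (ut k : ℂ)) := by rw [he]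
  rw [Finset.sum_congr rfl (fun k _ => hstep k), ← Finset.mul_sum]
  rw [show ∑ k, ((prolateS N q p j k * ut k : ℝ) : ℂ) = ((∑ k, prolateS N q p j k * ut k : ℝ) : ℂ)
    from (Complex.ofReal_sum _ _).symm, hrow]
  push_cast
  ring
end
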